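/- The function h(ω) = √ω + ε·log(ε) − ε·log(√ω + ε) is concave on [0,∞), i.e., for all s, s⁺ ≥ 0, h(s⁺) − h(s) ≤ h'(s)(s⁺ − s) where h'(s) = 1/(2(√s + ε)). -/

import Mathlib

private lemma sinh_le_mul_cosh : ∀ y : ℝ, 0 ≤ y → Real.sinh y ≤ y * Real.cosh y := by
  have hmono : MonotoneOn (fun y : ℝ => y * Real.cosh y - Real.sinh y) (Set.Ici 0) := by
    apply monotoneOn_of_deriv_nonneg (convex_Ici 0)
    · exact ((continuous_id.mul Real.continuous_cosh).sub Real.continuous_sinh).continuousOn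
    · intro x _
      exact (((hasDerivAt_id x).mul (Real.hasDerivAt_cosh x)).sub
        (Real.hasDerivAt_sinh x)).differentiableAt.differentiableWithinAt
    · intro x hx
      rw [interior_Ici, Set.mem_Ioi] at hx
      have hd : HasDerivAt (fun y : ℝ => y * Real.cosh y - Real.sinh y)
          (1 * Real.cosh x + x * Real.sinh x - Real.cosh x) x :=
        ((hasDerivAt_id x).mul (Real.hasDerivAt_cosh x)).sub (Real.hasDerivAt_sinh x)
      rw [hd.deriv]
      have : 0 ≤ Real.sinh x := Real.sinh_nonneg_iff.2 hx.le
      nlinarith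
  intro y hy
  have := hmono (Set.self_mem_Ici) (Set.mem_Ici.2 hy) hy
  simpa using this

/-- For `q ≤ p`, `log (p/q) ≤ (p² - q²)/(2pq)` (cleared form). -/
private lemma log_le_up (p q : ℝ) (hq : 0 < q) (hpq : q ≤ p) :
    2 * Real.log (p / q) * (p * q) ≤ p ^ 2 - q ^ 2 := by
  have hp : 0 < p := lt_of_lt_of_le hq hpq
  set x := Real.log (p / q) with hxdef
  have hx : 0 ≤ x := Real.log_nonneg ((one_le_div hq).2 hpq)
  have hex : Real.exp x = p / q := Real.exp_log (div_pos hp hq)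
  have hs : x ≤ Real.sinh x := Real.self_le_sinh_iff.2 hx
  rw [Real.sinh_eq, hex, Real.exp_neg, hex] at hs
  have h1 : p / q - (p / q)⁻¹ = (p ^ 2 - q ^ 2) / (p * q) := by
    field_simp
  rw [h1] at hs
  have := mul_le_mul_of_nonneg_right hs (le_of_lt (mul_pos hp hq))
  calc 2 * x * (p * q) = (x * (p * q)) * 2 := by ring
    _ ≤ ((p ^ 2 - q ^ 2) / (p * q) / 2 * (p * q)) * 2 := by nlinarith
    _ = p ^ 2 - q ^ 2 := by field_simp

/-- For `q ≤ p`, `2(p-q)/(p+q) ≤ log (p/q)` (cleared form). -/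
private lemma log_ge_low (p q : ℝ) (hq : 0 < q) (hpq : q ≤ p) :
    2 * (p - q) ≤ Real.log (p / q) * (p + q) := by
  have hp : 0 < p := lt_of_lt_of_le hq hpq
  set x := Real.log (p / q) with hxdef
  have hx : 0 ≤ x := Real.log_nonneg ((one_le_div hq).2 hpq)
  have hex : Real.exp x = p / q := Real.exp_log (div_pos hp hq)
  have hs : Real.sinh (x / 2) ≤ (x / 2) * Real.cosh (x / 2) :=
    sinh_le_mul_cosh (x / 2) (by linarith)
  rw [Real.sinh_eq, Real.cosh_eq] at hs
  have he2 : Real.exp (x / 2) * Real.exp (x / 2) = p / q := by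
    rw [← Real.exp_add]; norm_num [hex]
  have hei : Real.exp (-(x / 2)) * Real.exp (x / 2) = 1 := by
    rw [← Real.exp_add]; norm_num
  have hepos : 0 < Real.exp (x / 2) := Real.exp_pos _
  -- multiply hs by 2 * exp(x/2) > 0
  have hs2 : p / q - 1 ≤ (x / 2) * (p / q + 1) := by
    have := mul_le_mul_of_nonneg_right hs (le_of_lt hepos)
    nlinarith [this, he2, hei]
  have := mul_le_mul_of_nonneg_right hs2 (le_of_lt hq)
  have hq' : q ≠ 0 := ne_of_gt hq
  calc 2 * (p - q) = 2 * ((p / q - 1) * q) := by field_simp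
    _ ≤ 2 * ((x / 2) * (p / q + 1) * q) := by linarith
    _ = x * (p + q) := by field_simp

theorem stmt2 (ε : ℝ) (hε : 0 < ε)
    (h : ℝ → ℝ)
    (hdef : ∀ ω, h ω = Real.sqrt ω + ε * Real.log ε - ε * Real.log (Real.sqrt ω + ε)) :
    ∀ s ≥ (0:ℝ), ∀ splus ≥ (0:ℝ),
      h splus - h s ≤ (1 / (2 * (Real.sqrt s + ε))) * (splus - s) := by
  intro s hs splus hsp
  rw [hdef, hdef]
  set a := Real.sqrt s with hadef
  set b := Real.sqrt splus with hbdef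
  have ha : 0 ≤ a := Real.sqrt_nonneg s
  have hb : 0 ≤ b := Real.sqrt_nonneg splus
  have ha2 : a ^ 2 = s := Real.sq_sqrt hs
  have hb2 : b ^ 2 = splus := Real.sq_sqrt hsp
  have hap : 0 < a + ε := by linarith
  have hbp : 0 < b + ε := by linarith
  rw [← ha2, ← hb2]
  rw [div_mul_eq_mul_div, one_mul, le_div_iff₀ (by positivity)]
  -- goal: (b + ε log ε - ε log (b+ε) - (a + ε log ε - ε log (a+ε))) * (2(a+ε)) ≤ b² - a²
  rcases le_total b a with hba | hab
  · -- case b ≤ a : use upper bound on log((a+ε)/(b+ε))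
    have key := log_le_up (a + ε) (b + ε) hbp (by linarith)
    rw [Real.log_div (ne_of_gt hap) (ne_of_gt hbp)] at key
    nlinarith [key, mul_pos hap hbp, mul_nonneg hb (sq_nonneg (a - b)),
      mul_le_mul_of_nonneg_left key (le_of_lt hε)]
  · -- case a ≤ b : use lower bound on log((b+ε)/(a+ε))
    have key := log_ge_low (b + ε) (a + ε) hap (by linarith)
    rw [Real.log_div (ne_of_gt hbp) (ne_of_gt hap)] at key
    nlinarith [key, sq_nonneg (b - a), mul_nonneg (sub_nonneg.2 hab) (sub_nonneg.2 hab),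
      mul_le_mul_of_nonneg_left key (le_of_lt (mul_pos hε hap)),
      mul_nonneg (mul_nonneg (sub_nonneg.2 hab) (sub_nonneg.2 hab)) ha]
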